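/- Let l < 0 < u, s₀ = u/(u − l), t₀ = −u·l/(u − l). If h(z) = s·z + t is any linear function with max(z, 0) ≤ h(z) for all z ∈ [l, u], then h(z) ≥ s₀ z + t₀ for all z ∈ [l, u]; i.e., the chord is the tightest upper-bounding line for ReLU on [l, u]. -/

import Mathlib

/-- For `l < 0 < u`, the chord is the tightest linear upper bound for ReLU on `[l, u]`:
any linear upper bound dominates the chord pointwise on the interval. -/
theorem relu_chord_tightest (l u : ℝ) (hl : l < 0) (hu : 0 < u) (s t : ℝ)
    (h : ∀ z ∈ Set.Icc l u, max z 0 ≤ s * z + t) :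
    ∀ z ∈ Set.Icc l u,
      (u / (u - l)) * z + (-(u * l) / (u - l)) ≤ s * z + t := by
  intro z hz
  obtain ⟨hzl, hzu⟩ := hz
  have h1 := h l ⟨le_refl l, by linarith⟩
  have h2 := h u ⟨by linarith, le_refl u⟩
  have hml : max l 0 = 0 := max_eq_right hl.le
  have hmu : max u 0 = u := max_eq_left hu.le
  rw [hml] at h1; rw [hmu] at h2
  have hul : (0:ℝ) < u - l := by linarith
  rw [div_mul_eq_mul_div, ← add_div, div_le_iff₀ hul]
  nlinarith [mul_nonneg (sub_nonneg.2 hzu) (sub_nonneg.2 (le_trans (le_refl 0) h1)),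
    mul_le_mul_of_nonneg_left h1 (sub_nonneg.2 hzu),
    mul_le_mul_of_nonneg_left h2 (sub_nonneg.2 hzl)]
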